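/- Let L ⊆ ℝⁿ be a full-rank lattice, s > 0, and let D ⊆ ℝⁿ be a measurable fundamental domain of L (the translates D + v for v ∈ L partition ℝⁿ up to measure zero). For x ∈ ℝⁿ define the function H_s(x) : ℝⁿ → ℝ by H_s(x)(z) = (s/√(2·ρ_s(L))) · (2/s)^{n/2} · ρ_{s/√2}(L + z − x). Then for all x, y ∈ ℝⁿ: ∫_D (H_s(x)(z) − H_s(y)(z))² dz = s² · (1 − ρ_s(L − (x − y))/ρ_s(L)). -/

import Mathlib

open Metric Submodule MeasureTheory
open scoped ENNReal NNReal
noncomputable section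

/-- The Gaussian mass `ρ_s(A) = Σ_{a ∈ A} exp(−π‖a/s‖²)` of a set `A`. -/
def gMass {E : Type*} [NormedAddCommGroup E] (s : ℝ) (A : Set E) : ℝ :=
  ∑' a : A, Real.exp (-Real.pi * (‖(a : E)‖ / s) ^ 2)

/-- The Gaussian embedding `H_s(x)(z) = (s/√(2ρ_s(L))) · (2/s)^{n/2} · ρ_{s/√2}(L + z − x)`. -/
def gaussEmbed {n : ℕ} (L : Submodule ℤ (EuclideanSpace ℝ (Fin n))) (s : ℝ)
    (x z : EuclideanSpace ℝ (Fin n)) : ℝ :=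
  (s / Real.sqrt (2 * gMass s (L : Set (EuclideanSpace ℝ (Fin n)))))
    * (2 / s) ^ ((n : ℝ) / 2)
    * gMass (s / Real.sqrt 2) ((fun v => v + z - x) '' (L : Set (EuclideanSpace ℝ (Fin n))))



variable {n : ℕ}

local notation "E" => EuclideanSpace ℝ (Fin n)

lemma minnorm (L : Submodule ℤ E) [DiscreteTopology L] :
    ∃ r > 0, ∀ v : L, ‖(v : E)‖ < r → v = 0 := by
  have h : IsOpen ({0} : Set L) := isOpen_discrete _
  rw [isOpen_induced_iff] at h
  obtain ⟨U, hU, hUeq⟩ := h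
  have h0 : (0 : E) ∈ U := by
    have : (0 : L) ∈ (Subtype.val ⁻¹' U : Set L) := by rw [hUeq]; rfl
    exact this
  obtain ⟨ε, hε, hball⟩ := Metric.isOpen_iff.mp hU 0 h0
  refine ⟨ε, hε, fun v hv => ?_⟩
  have : v ∈ (Subtype.val ⁻¹' U : Set L) := hball (by simpa [mem_ball, dist_zero_right] using hv)
  rw [hUeq] at this
  exact this

lemma integrable_gauss {b : ℝ} (hb : 0 < b) :
    Integrable (fun z : E => Real.exp (-b * ‖z‖ ^ 2)) := by
  have := (GaussianFourier.integrable_cexp_neg_mul_sq_norm_add (V := E) (b := (b : ℂ))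
    (by simpa using hb) 0 0).norm
  simpa [Complex.norm_exp, ← Complex.ofReal_pow] using this

lemma summable_gauss_base (L : Submodule ℤ E) [DiscreteTopology L] (hL : IsZLattice ℝ L)
    {c : ℝ} (hc : 0 < c) :
    Summable fun v : L => Real.exp (-c * ‖(v : E)‖ ^ 2) := by
  haveI := hL
  obtain ⟨r, hr, hmin⟩ := minnorm L
  set ρ := r / 2 with hρdef
  have hρ : 0 < ρ := by positivity
  -- pairwise disjoint balls
  have hdisj : Pairwise (Function.onFun Disjoint fun v : L => Metric.ball ((v : E)) ρ) := by
    intro v w hvw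
    apply Metric.ball_disjoint_ball
    have : v - w ≠ 0 := sub_ne_zero.mpr hvw
    have h2 : r ≤ ‖((v - w : L) : E)‖ := by
      by_contra h
      exact this (hmin _ (lt_of_not_ge h))
    have h3 : ‖((v - w : L) : E)‖ = dist ((v : E)) ((w : E)) := by
      rw [dist_eq_norm]; norm_cast
    rw [h3] at h2
    linarith
  -- lower bound for each ball integral
  set g : E → ℝ≥0∞ := fun z => ENNReal.ofReal (Real.exp (-(c / 2) * ‖z‖ ^ 2)) with hgdef
  have hgmeas : Measurable g := by
    apply ENNReal.measurable_ofReal.comp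
    exact (Real.continuous_exp.comp (by continuity)).measurable
  set C : ℝ≥0∞ := volume (Metric.ball (0 : E) ρ) * ENNReal.ofReal (Real.exp (-c * ρ ^ 2)) with hCdef
  have hC0 : C ≠ 0 := by
    simp only [hCdef]
    apply mul_ne_zero
    · exact (Metric.measure_ball_pos volume 0 hρ).ne'
    · simp [Real.exp_pos]
  have hCtop : C ≠ ⊤ := by
    simp only [hCdef]
    exact ENNReal.mul_ne_top measure_ball_lt_top.ne ENNReal.ofReal_ne_top
  have hle : ∀ v : L, C * ENNReal.ofReal (Real.exp (-c * ‖(v : E)‖ ^ 2))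
      ≤ ∫⁻ z in Metric.ball ((v : E)) ρ, g z := by
    intro v
    have hball : volume (Metric.ball ((v : E)) ρ) = volume (Metric.ball (0 : E) ρ) :=
      Measure.addHaar_ball_center volume _ _
    calc C * ENNReal.ofReal (Real.exp (-c * ‖(v : E)‖ ^ 2))
        = volume (Metric.ball ((v : E)) ρ)
            * ENNReal.ofReal (Real.exp (-c * ρ ^ 2) * Real.exp (-c * ‖(v : E)‖ ^ 2)) := by
          rw [hCdef, hball, ENNReal.ofReal_mul (Real.exp_nonneg _)]; ring
      _ = ∫⁻ _ in Metric.ball ((v : E)) ρ,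
            ENNReal.ofReal (Real.exp (-c * ρ ^ 2) * Real.exp (-c * ‖(v : E)‖ ^ 2)) := by
          rw [setLIntegral_const, mul_comm]
      _ ≤ ∫⁻ z in Metric.ball ((v : E)) ρ, g z := by
          apply setLIntegral_mono hgmeas
          intro z hz
          apply ENNReal.ofReal_le_ofReal
          rw [← Real.exp_add]
          apply Real.exp_le_exp.mpr
          have h1 : ‖z‖ ≤ ‖(v : E)‖ + ρ := by
            have h0 := mem_ball_iff_norm.mp hz
            have : ‖z‖ = ‖(v : E) + (z - (v : E))‖ := by congr 1; abel
            rw [this]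
            calc ‖(v : E) + (z - (v : E))‖ ≤ ‖(v : E)‖ + ‖z - (v : E)‖ := norm_add_le _ _
            _ ≤ ‖(v : E)‖ + ρ := by linarith
          nlinarith [mul_self_le_mul_self (norm_nonneg z) h1, norm_nonneg ((v : E)),
            norm_nonneg z, hρ.le, sq_nonneg (‖(v : E)‖ - ρ)]
  have hsum_le : ∑' v : L, C * ENNReal.ofReal (Real.exp (-c * ‖(v : E)‖ ^ 2))
      ≤ ∫⁻ z, g z := by
    calc ∑' v : L, C * ENNReal.ofReal (Real.exp (-c * ‖(v : E)‖ ^ 2))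
        ≤ ∑' v : L, ∫⁻ z in Metric.ball ((v : E)) ρ, g z := ENNReal.tsum_le_tsum hle
      _ = ∫⁻ z in ⋃ v : L, Metric.ball ((v : E)) ρ, g z :=
          (lintegral_iUnion (fun v => measurableSet_ball) hdisj g).symm
      _ ≤ ∫⁻ z, g z := setLIntegral_le_lintegral _ _
  have hfin : ∫⁻ z, g z ≠ ⊤ := by
    rw [← ofReal_integral_eq_lintegral_ofReal (integrable_gauss (by positivity))
      (Filter.Eventually.of_forall fun z => Real.exp_nonneg _)]
    exact ENNReal.ofReal_ne_top
  rw [ENNReal.tsum_mul_left] at hsum_le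
  have htsum : ∑' v : L, ENNReal.ofReal (Real.exp (-c * ‖(v : E)‖ ^ 2)) ≠ ⊤ := by
    intro htop
    rw [htop, ENNReal.mul_top hC0] at hsum_le
    exact hfin (top_le_iff.mp hsum_le)
  have := ENNReal.summable_toReal htsum
  simpa [ENNReal.toReal_ofReal (Real.exp_nonneg _)] using this

lemma summable_gauss_shift (L : Submodule ℤ E) [DiscreteTopology L] (hL : IsZLattice ℝ L)
    {c : ℝ} (hc : 0 < c) (w : E) :
    Summable fun v : L => Real.exp (-c * ‖(v : E) + w‖ ^ 2) := by
  apply Summable.of_nonneg_of_le (fun _ => Real.exp_nonneg _) (fun v => ?_)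
    ((summable_gauss_base L hL (half_pos hc)).mul_left (Real.exp (c * ‖w‖ ^ 2)))
  rw [← Real.exp_add]
  apply Real.exp_le_exp.mpr
  have h1 : ‖(v : E)‖ ≤ ‖(v : E) + w‖ + ‖w‖ := by
    have : ‖(v : E)‖ = ‖((v : E) + w) + (-w)‖ := by congr 1; abel
    rw [this]
    calc ‖((v : E) + w) + (-w)‖ ≤ ‖(v : E) + w‖ + ‖(-w)‖ := norm_add_le _ _
    _ = ‖(v : E) + w‖ + ‖w‖ := by rw [norm_neg]
  nlinarith [mul_self_le_mul_self (norm_nonneg ((v : E))) h1, norm_nonneg ((v : E) + w),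
    norm_nonneg w, sq_nonneg (‖(v : E) + w‖ - ‖w‖)]

lemma gauss_prod_key {b : ℝ} (a c z : E) :
    Real.exp (-b * ‖z - a‖ ^ 2) * Real.exp (-b * ‖z - c‖ ^ 2)
      = Real.exp (-(b / 2) * ‖a - c‖ ^ 2)
        * Real.exp (-(2 * b) * ‖z - (2 : ℝ)⁻¹ • (a + c)‖ ^ 2) := by
  rw [← Real.exp_add, ← Real.exp_add]
  congr 1
  set u : E := z - (2 : ℝ)⁻¹ • (a + c) with hu
  set d : E := (2 : ℝ)⁻¹ • (a - c) with hd
  have h1 : z - a = u - d := by rw [hu, hd]; module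
  have h2 : z - c = u + d := by rw [hu, hd]; module
  have hpar := parallelogram_law_with_norm ℝ u d
  have hdn : ‖d‖ * ‖d‖ = (2 : ℝ)⁻¹ * (2 : ℝ)⁻¹ * (‖a - c‖ * ‖a - c‖) := by
    rw [hd, norm_smul]
    simp [abs_of_nonneg]
    ring
  rw [h1, h2]
  have e1 : ‖u - d‖ ^ 2 = ‖u - d‖ * ‖u - d‖ := sq ‖u - d‖
  have e2 : ‖u + d‖ ^ 2 = ‖u + d‖ * ‖u + d‖ := sq ‖u + d‖
  have e3 : ‖a - c‖ ^ 2 = ‖a - c‖ * ‖a - c‖ := sq ‖a - c‖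
  have e4 : ‖u‖ ^ 2 = ‖u‖ * ‖u‖ := sq ‖u‖
  rw [e1, e2, e3, e4]
  linear_combination (-b) * hpar - 2 * b * hdn

lemma integrable_gauss_prod {b : ℝ} (hb : 0 < b) (a c : E) :
    Integrable (fun z : E => Real.exp (-b * ‖z - a‖ ^ 2) * Real.exp (-b * ‖z - c‖ ^ 2)) := by
  simp only [gauss_prod_key a c]
  apply Integrable.const_mul
  have h := (integrable_gauss (n := n) (by positivity : (0:ℝ) < 2 * b)).comp_sub_right
    ((2 : ℝ)⁻¹ • (a + c))
  exact h

lemma integral_gauss_prod {b : ℝ} (hb : 0 < b) (a c : E) :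
    ∫ z : E, Real.exp (-b * ‖z - a‖ ^ 2) * Real.exp (-b * ‖z - c‖ ^ 2)
      = (Real.pi / (2 * b)) ^ ((n : ℝ) / 2) * Real.exp (-(b / 2) * ‖a - c‖ ^ 2) := by
  simp only [gauss_prod_key a c]
  rw [integral_const_mul]
  have h2b : 0 < 2 * b := by positivity
  have := GaussianFourier.integral_rexp_neg_mul_sq_norm (V := E) h2b
  rw [integral_sub_right_eq_self (fun z : E => Real.exp (-(2 * b) * ‖z‖ ^ 2))
    ((2 : ℝ)⁻¹ • (a + c)), this]
  rw [finrank_euclideanSpace_fin]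
  ring

lemma meas_ofReal_gauss (b : ℝ) (f : E → E) (hf : Continuous f) :
    Measurable fun z : E => ENNReal.ofReal (Real.exp (-b * ‖f z‖ ^ 2)) :=
  ENNReal.measurable_ofReal.comp
    (Real.continuous_exp.comp (continuous_const.mul (hf.norm.pow 2))).measurable

set_option maxHeartbeats 1000000 in
lemma cross_lintegral (L : Submodule ℤ E) [DiscreteTopology L] (hL : IsZLattice ℝ L)
    {b : ℝ} (hb : 0 < b) (D : Set E)
    (hD : IsAddFundamentalDomain L.toAddSubgroup D volume) (x y : E) :
    ∫⁻ z in D, (∑' v : L, ENNReal.ofReal (Real.exp (-b * ‖(v : E) + z - x‖ ^ 2)))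
        * (∑' v : L, ENNReal.ofReal (Real.exp (-b * ‖(v : E) + z - y‖ ^ 2)))
      = ENNReal.ofReal ((Real.pi / (2 * b)) ^ ((n : ℝ) / 2)
          * ∑' v : L, Real.exp (-(b / 2) * ‖(v : E) + x - y‖ ^ 2)) := by
  haveI := hL
  haveI : Countable L.toAddSubgroup :=
    Countable.of_equiv ↥L (Equiv.subtypeEquivRight fun z => (Submodule.mem_toAddSubgroup L).symm)
  set Ey : E → ℝ≥0∞ := fun z => ∑' v : L, ENNReal.ofReal (Real.exp (-b * ‖(v : E) + z - y‖ ^ 2))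
    with hEy
  have hcont : ∀ w u : E, Continuous fun z : E => w + z - u :=
    fun w u => (continuous_const.add continuous_id).sub continuous_const
  have hterm_meas : ∀ w : E, Measurable fun z : E => ENNReal.ofReal (Real.exp (-b * ‖w + z - y‖ ^ 2)) :=
    fun w => meas_ofReal_gauss b _ (hcont w y)
  have hterm_meas' : ∀ w : E, Measurable fun z : E => ENNReal.ofReal (Real.exp (-b * ‖w + z - x‖ ^ 2)) :=
    fun w => meas_ofReal_gauss b _ (hcont w x)
  have hEymeas : Measurable Ey := Measurable.ennreal_tsum fun v => hterm_meas (v : E)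
  have hEyper : ∀ (g : L) (z : E), Ey ((g : E) + z) = Ey z := by
    intro g z
    have harg : ∀ v : L, (v : E) + ((g : E) + z) - y = ((v + g : L) : E) + z - y := by
      intro v; push_cast; abel
    calc Ey ((g : E) + z)
        = ∑' v : L, ENNReal.ofReal (Real.exp (-b * ‖(v : E) + ((g : E) + z) - y‖ ^ 2)) := rfl
      _ = ∑' v : L, (fun u : L => ENNReal.ofReal (Real.exp (-b * ‖(u : E) + z - y‖ ^ 2))) (v + g) := by
          exact tsum_congr fun v => by rw [harg v]
      _ = Ey z := Equiv.tsum_eq (Equiv.addRight g)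
          (fun u : L => ENNReal.ofReal (Real.exp (-b * ‖(u : E) + z - y‖ ^ 2)))
  set F : E → ℝ≥0∞ := fun z => ENNReal.ofReal (Real.exp (-b * ‖z - x‖ ^ 2)) * Ey z with hF
  have step1 : ∫⁻ z in D,
      (∑' v : L, ENNReal.ofReal (Real.exp (-b * ‖(v : E) + z - x‖ ^ 2))) * Ey z
      = ∑' v : L, ∫⁻ z in D, ENNReal.ofReal (Real.exp (-b * ‖(v : E) + z - x‖ ^ 2)) * Ey z := by
    rw [← lintegral_tsum (f := fun (v : L) (z : E) =>
      ENNReal.ofReal (Real.exp (-b * ‖(v : E) + z - x‖ ^ 2)) * Ey z) (fun v : L =>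
      ((hterm_meas' (v : E)).mul hEymeas).aemeasurable)]
    exact lintegral_congr fun z => ENNReal.tsum_mul_right.symm
  have step2 : ∀ v : L, (∫⁻ z in D, ENNReal.ofReal (Real.exp (-b * ‖(v : E) + z - x‖ ^ 2)) * Ey z)
      = ∫⁻ z in D, F ((v : E) + z) := by
    intro v
    refine lintegral_congr fun z => ?_
    rw [hF]
    simp only []
    rw [hEyper v z]
  have step3 : ∑' v : L, ∫⁻ z in D, F ((v : E) + z) = ∫⁻ z, F z := by
    rw [hD.lintegral_eq_tsum'' F]
    exact ((Equiv.subtypeEquivRight fun z => (Submodule.mem_toAddSubgroup L).symm).tsum_eq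
      fun g : L.toAddSubgroup => ∫⁻ z in D, F ((g : E) + z)).symm
  have hsummable : Summable fun v : L =>
      Real.exp (-(b / 2) * ‖(v : E) + x - y‖ ^ 2) := by
    have := summable_gauss_shift L hL (half_pos hb) (x - y)
    simpa [add_sub_assoc] using this
  have step4 : ∫⁻ z, F z = ENNReal.ofReal ((Real.pi / (2 * b)) ^ ((n : ℝ) / 2)
      * ∑' v : L, Real.exp (-(b / 2) * ‖(v : E) + x - y‖ ^ 2)) := by
    calc ∫⁻ z, F z
        = ∫⁻ z, ∑' w : L, ENNReal.ofReal (Real.exp (-b * ‖z - x‖ ^ 2))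
            * ENNReal.ofReal (Real.exp (-b * ‖(w : E) + z - y‖ ^ 2)) := by
          refine lintegral_congr fun z => ?_
          rw [hF]
          simp only []
          rw [hEy]
          simp only []
          rw [ENNReal.tsum_mul_left]
      _ = ∑' w : L, ∫⁻ z, ENNReal.ofReal (Real.exp (-b * ‖z - x‖ ^ 2))
            * ENNReal.ofReal (Real.exp (-b * ‖(w : E) + z - y‖ ^ 2)) := by
          refine lintegral_tsum fun w => Measurable.aemeasurable ?_
          exact (meas_ofReal_gauss b _ (continuous_id.sub continuous_const)).mul
            (hterm_meas (w : E))
      _ = ∑' w : L, ∫⁻ z, ENNReal.ofReal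
            (Real.exp (-b * ‖z - x‖ ^ 2) * Real.exp (-b * ‖z - (y - (w : E))‖ ^ 2)) := by
          refine tsum_congr fun w => lintegral_congr fun z => ?_
          rw [ENNReal.ofReal_mul (Real.exp_nonneg _)]
          congr 4
          abel
      _ = ∑' w : L, ENNReal.ofReal
            (∫ z, Real.exp (-b * ‖z - x‖ ^ 2) * Real.exp (-b * ‖z - (y - (w : E))‖ ^ 2)) := by
          refine tsum_congr fun w => ?_
          rw [ofReal_integral_eq_lintegral_ofReal (integrable_gauss_prod hb x (y - (w : E)))
            (Filter.Eventually.of_forall fun z =>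
              mul_nonneg (Real.exp_nonneg _) (Real.exp_nonneg _))]
      _ = ∑' w : L, ENNReal.ofReal ((Real.pi / (2 * b)) ^ ((n : ℝ) / 2)
            * Real.exp (-(b / 2) * ‖(w : E) + x - y‖ ^ 2)) := by
          refine tsum_congr fun w => ?_
          rw [integral_gauss_prod hb x (y - (w : E))]
          congr 4
          abel
      _ = ENNReal.ofReal (∑' w : L, (Real.pi / (2 * b)) ^ ((n : ℝ) / 2)
            * Real.exp (-(b / 2) * ‖(w : E) + x - y‖ ^ 2)) := by
          rw [ENNReal.ofReal_tsum_of_nonneg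
            (fun w => mul_nonneg (by positivity) (Real.exp_nonneg _))
            (hsummable.mul_left _)]
      _ = ENNReal.ofReal ((Real.pi / (2 * b)) ^ ((n : ℝ) / 2)
            * ∑' v : L, Real.exp (-(b / 2) * ‖(v : E) + x - y‖ ^ 2)) := by
          rw [tsum_mul_left]
  rw [show (fun z => (∑' v : L, ENNReal.ofReal (Real.exp (-b * ‖(v : E) + z - x‖ ^ 2)))
        * (∑' v : L, ENNReal.ofReal (Real.exp (-b * ‖(v : E) + z - y‖ ^ 2))))
      = fun z => (∑' v : L, ENNReal.ofReal (Real.exp (-b * ‖(v : E) + z - x‖ ^ 2))) * Ey z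
      from rfl]
  rw [step1]
  rw [tsum_congr step2, step3, step4]

set_option maxHeartbeats 1000000 in
lemma cross_integral (L : Submodule ℤ E) [DiscreteTopology L] (hL : IsZLattice ℝ L)
    {b : ℝ} (hb : 0 < b) (D : Set E)
    (hD : IsAddFundamentalDomain L.toAddSubgroup D volume) (x y : E) :
    IntegrableOn (fun z : E => (∑' v : L, Real.exp (-b * ‖(v : E) + z - x‖ ^ 2))
        * (∑' v : L, Real.exp (-b * ‖(v : E) + z - y‖ ^ 2))) D volume
      ∧ ∫ z in D, (∑' v : L, Real.exp (-b * ‖(v : E) + z - x‖ ^ 2))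
          * (∑' v : L, Real.exp (-b * ‖(v : E) + z - y‖ ^ 2))
        = (Real.pi / (2 * b)) ^ ((n : ℝ) / 2)
          * ∑' v : L, Real.exp (-(b / 2) * ‖(v : E) + x - y‖ ^ 2) := by
  haveI := hL
  set Ex : E → ℝ≥0∞ := fun z => ∑' v : L, ENNReal.ofReal (Real.exp (-b * ‖(v : E) + z - x‖ ^ 2))
    with hEx
  set Ey : E → ℝ≥0∞ := fun z => ∑' v : L, ENNReal.ofReal (Real.exp (-b * ‖(v : E) + z - y‖ ^ 2))
    with hEy
  have hcont : ∀ w u : E, Continuous fun z : E => w + z - u :=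
    fun w u => (continuous_const.add continuous_id).sub continuous_const
  have hExmeas : Measurable Ex :=
    Measurable.ennreal_tsum fun v => meas_ofReal_gauss b _ (hcont (v : E) x)
  have hEymeas : Measurable Ey :=
    Measurable.ennreal_tsum fun v => meas_ofReal_gauss b _ (hcont (v : E) y)
  have hsumx : ∀ z : E, Summable fun v : L => Real.exp (-b * ‖(v : E) + z - x‖ ^ 2) := by
    intro z
    have := summable_gauss_shift L hL hb (z - x)
    simpa [add_sub_assoc] using this
  have hsumy : ∀ z : E, Summable fun v : L => Real.exp (-b * ‖(v : E) + z - y‖ ^ 2) := by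
    intro z
    have := summable_gauss_shift L hL hb (z - y)
    simpa [add_sub_assoc] using this
  have hprod_eq : ∀ z : E, (∑' v : L, Real.exp (-b * ‖(v : E) + z - x‖ ^ 2))
      * (∑' v : L, Real.exp (-b * ‖(v : E) + z - y‖ ^ 2)) = (Ex z * Ey z).toReal := by
    intro z
    rw [ENNReal.toReal_mul, hEx, hEy]
    simp only []
    rw [← ENNReal.ofReal_tsum_of_nonneg (fun v => Real.exp_nonneg _) (hsumx z),
      ← ENNReal.ofReal_tsum_of_nonneg (fun v => Real.exp_nonneg _) (hsumy z),
      ENNReal.toReal_ofReal (tsum_nonneg fun v => Real.exp_nonneg _),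
      ENNReal.toReal_ofReal (tsum_nonneg fun v => Real.exp_nonneg _)]
  have hmeas : Measurable fun z : E => Ex z * Ey z := hExmeas.mul hEymeas
  have hne : ∫⁻ z in D, Ex z * Ey z ≠ ⊤ := by
    rw [cross_lintegral L hL hb D hD x y]
    exact ENNReal.ofReal_ne_top
  have hint : IntegrableOn (fun z : E => (Ex z * Ey z).toReal) D volume :=
    integrable_toReal_of_lintegral_ne_top hmeas.aemeasurable hne
  rw [show (fun z : E => (∑' v : L, Real.exp (-b * ‖(v : E) + z - x‖ ^ 2))
      * (∑' v : L, Real.exp (-b * ‖(v : E) + z - y‖ ^ 2)))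
    = fun z : E => (Ex z * Ey z).toReal from funext hprod_eq]
  refine ⟨hint, ?_⟩
  rw [integral_toReal hmeas.aemeasurable (ae_lt_top' hmeas.aemeasurable hne),
    cross_lintegral L hL hb D hD x y,
    ENNReal.toReal_ofReal (mul_nonneg (Real.rpow_nonneg (by positivity) _)
      (tsum_nonneg fun v => Real.exp_nonneg _))]

lemma gMass_image (t : ℝ) (g : E → E) (hg : Function.Injective g) (A : Set E) :
    (∑' a : (g '' A), Real.exp (-Real.pi * (‖(a : E)‖ / t) ^ 2))
      = ∑' a : A, Real.exp (-Real.pi * (‖g (a : E)‖ / t) ^ 2) := by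
  rw [← Equiv.tsum_eq (Equiv.Set.image g A hg)
    (fun a : (g '' A) => Real.exp (-Real.pi * (‖(a : E)‖ / t) ^ 2))]
  refine tsum_congr fun a => ?_
  congr

end


set_option maxHeartbeats 1000000 in
theorem gaussEmbed_dist_sq
    (n : ℕ) (hn : 1 ≤ n)
    (L : Submodule ℤ (EuclideanSpace ℝ (Fin n))) [DiscreteTopology L]
    (hL : IsZLattice ℝ L) (s : ℝ) (hs : 0 < s)
    (D : Set (EuclideanSpace ℝ (Fin n))) (hDmeas : MeasurableSet D)
    (hD : MeasureTheory.IsAddFundamentalDomain L.toAddSubgroup D MeasureTheory.volume)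
    (x y : EuclideanSpace ℝ (Fin n)) :
    ∫ z in D, (gaussEmbed L s x z - gaussEmbed L s y z) ^ 2
      = s ^ 2 * (1 - gMass s ((fun v => v - (x - y)) '' (L : Set (EuclideanSpace ℝ (Fin n))))
            / gMass s (L : Set (EuclideanSpace ℝ (Fin n)))) := by
  haveI := hL
  have hs' : s ≠ 0 := hs.ne'
  set b : ℝ := 2 * Real.pi / s ^ 2 with hb_def
  have hb : 0 < b := by positivity
  -- exponent translation for scale s/√2
  have hexp1 : ∀ w : EuclideanSpace ℝ (Fin n), -Real.pi * (‖w‖ / (s / Real.sqrt 2)) ^ 2 = -b * ‖w‖ ^ 2 := by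
    intro w
    have h2 : (Real.sqrt 2) ^ 2 = 2 := Real.sq_sqrt (by norm_num)
    rw [hb_def, div_pow, div_pow, h2]
    have h2' : Real.sqrt 2 ≠ 0 := by positivity
    field_simp
  -- exponent translation for scale s
  have hexp2 : ∀ w : EuclideanSpace ℝ (Fin n), -Real.pi * (‖w‖ / s) ^ 2 = -(b / 2) * ‖w‖ ^ 2 := by
    intro w
    rw [hb_def, div_pow]
    field_simp
  -- rewrite the shifted Gaussian masses
  have haux : ∀ x' z : EuclideanSpace ℝ (Fin n), gMass (s / Real.sqrt 2) ((fun v => v + z - x') '' (L : Set (EuclideanSpace ℝ (Fin n))))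
      = ∑' v : L, Real.exp (-b * ‖(v : EuclideanSpace ℝ (Fin n)) + z - x'‖ ^ 2) := by
    intro x' z
    have hinj : Function.Injective fun v : EuclideanSpace ℝ (Fin n) => v + z - x' := by
      intro a1 a2 h
      simpa using h
    rw [gMass, gMass_image (s / Real.sqrt 2) _ hinj (L : Set (EuclideanSpace ℝ (Fin n)))]
    exact tsum_congr fun a => by simp only [hexp1]
  have hG0 : gMass s (L : Set (EuclideanSpace ℝ (Fin n))) = ∑' v : L, Real.exp (-(b / 2) * ‖(v : EuclideanSpace ℝ (Fin n))‖ ^ 2) := by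
    rw [gMass]
    exact tsum_congr fun a => by rw [hexp2]
  have hGxy : gMass s ((fun v => v - (x - y)) '' (L : Set (EuclideanSpace ℝ (Fin n))))
      = ∑' v : L, Real.exp (-(b / 2) * ‖(v : EuclideanSpace ℝ (Fin n)) + x - y‖ ^ 2) := by
    have hinj : Function.Injective fun v : EuclideanSpace ℝ (Fin n) => v - (x - y) := by
      intro a1 a2 h
      simpa using h
    rw [gMass, gMass_image s _ hinj (L : Set (EuclideanSpace ℝ (Fin n)))]
    have h1 : (∑' a : (L : Set (EuclideanSpace ℝ (Fin n))), Real.exp (-Real.pi * (‖(a : EuclideanSpace ℝ (Fin n)) - (x - y)‖ / s) ^ 2))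
        = ∑' v : L, Real.exp (-(b / 2) * ‖(v : EuclideanSpace ℝ (Fin n)) - (x - y)‖ ^ 2) :=
      tsum_congr fun a => by simp only [hexp2]
    rw [h1, ← Equiv.tsum_eq (Equiv.neg ↥L)
      (fun v : L => Real.exp (-(b / 2) * ‖(v : EuclideanSpace ℝ (Fin n)) - (x - y)‖ ^ 2))]
    refine tsum_congr fun v => ?_
    have harg : ‖((-v : L) : EuclideanSpace ℝ (Fin n)) - (x - y)‖ = ‖(v : EuclideanSpace ℝ (Fin n)) + x - y‖ := by
      rw [show ((-v : L) : EuclideanSpace ℝ (Fin n)) = -(v : EuclideanSpace ℝ (Fin n)) from rfl]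
      rw [show -(v : EuclideanSpace ℝ (Fin n)) - (x - y) = -((v : EuclideanSpace ℝ (Fin n)) + x - y) by abel, norm_neg]
    rw [Equiv.neg_apply, harg]
  -- the summands
  set gx : EuclideanSpace ℝ (Fin n) → ℝ := fun z => ∑' v : L, Real.exp (-b * ‖(v : EuclideanSpace ℝ (Fin n)) + z - x‖ ^ 2) with hgx
  set gy : EuclideanSpace ℝ (Fin n) → ℝ := fun z => ∑' v : L, Real.exp (-b * ‖(v : EuclideanSpace ℝ (Fin n)) + z - y‖ ^ 2) with hgy
  set c : ℝ := (s / Real.sqrt (2 * gMass s (L : Set (EuclideanSpace ℝ (Fin n))))) * (2 / s) ^ ((n : ℝ) / 2) with hc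
  have hge : ∀ x' z : EuclideanSpace ℝ (Fin n), gaussEmbed L s x' z = c * ∑' v : L, Real.exp (-b * ‖(v : EuclideanSpace ℝ (Fin n)) + z - x'‖ ^ 2) := by
    intro x' z
    rw [gaussEmbed, haux x' z, hc, mul_assoc]
  set K : ℝ := (Real.pi / (2 * b)) ^ ((n : ℝ) / 2) with hK
  -- the three integrals
  obtain ⟨hIxx, hVxx⟩ := cross_integral L hL hb D hD x x
  obtain ⟨hIxy, hVxy⟩ := cross_integral L hL hb D hD x y
  obtain ⟨hIyy, hVyy⟩ := cross_integral L hL hb D hD y y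
  set G0 : ℝ := ∑' v : L, Real.exp (-(b / 2) * ‖(v : EuclideanSpace ℝ (Fin n))‖ ^ 2) with hG0d
  set Gxy : ℝ := ∑' v : L, Real.exp (-(b / 2) * ‖(v : EuclideanSpace ℝ (Fin n)) + x - y‖ ^ 2) with hGxyd
  have hsumG0 : Summable fun v : L => Real.exp (-(b / 2) * ‖(v : EuclideanSpace ℝ (Fin n))‖ ^ 2) :=
    summable_gauss_base L hL (half_pos hb)
  have hG0pos : 0 < G0 := by
    rw [hG0d]
    refine Summable.tsum_pos hsumG0 (fun v => Real.exp_nonneg _) 0 ?_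
    exact Real.exp_pos _
  have hdiag : ∀ x' : EuclideanSpace ℝ (Fin n), (∑' v : L, Real.exp (-(b / 2) * ‖(v : EuclideanSpace ℝ (Fin n)) + x' - x'‖ ^ 2)) = G0 := by
    intro x'
    rw [hG0d]
    exact tsum_congr fun v => by rw [add_sub_cancel_right]
  rw [hdiag x] at hVxx
  rw [hdiag y] at hVyy
  -- expand the square
  have hptw : ∀ z : EuclideanSpace ℝ (Fin n), (gaussEmbed L s x z - gaussEmbed L s y z) ^ 2
      = (c ^ 2 * (gx z * gx z) - c ^ 2 * (gx z * gy z))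
        - (c ^ 2 * (gx z * gy z) - c ^ 2 * (gy z * gy z)) := by
    intro z
    rw [hge x z, hge y z, hgx, hgy]
    ring
  rw [show (fun z : EuclideanSpace ℝ (Fin n) => (gaussEmbed L s x z - gaussEmbed L s y z) ^ 2)
    = fun z : EuclideanSpace ℝ (Fin n) => (c ^ 2 * (gx z * gx z) - c ^ 2 * (gx z * gy z))
        - (c ^ 2 * (gx z * gy z) - c ^ 2 * (gy z * gy z)) from funext hptw]
  have hI1 : IntegrableOn (fun z : EuclideanSpace ℝ (Fin n) => c ^ 2 * (gx z * gx z)) D volume := hIxx.const_mul _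
  have hI2 : IntegrableOn (fun z : EuclideanSpace ℝ (Fin n) => c ^ 2 * (gx z * gy z)) D volume := hIxy.const_mul _
  have hI3 : IntegrableOn (fun z : EuclideanSpace ℝ (Fin n) => c ^ 2 * (gy z * gy z)) D volume := hIyy.const_mul _
  have hI12 : IntegrableOn (fun z => c ^ 2 * (gx z * gx z) - c ^ 2 * (gx z * gy z)) D volume :=
    hI1.sub hI2
  have hI23 : IntegrableOn (fun z => c ^ 2 * (gx z * gy z) - c ^ 2 * (gy z * gy z)) D volume :=
    hI2.sub hI3
  rw [integral_sub hI12 hI23, integral_sub hI1 hI2, integral_sub hI2 hI3]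
  simp only [integral_const_mul]
  rw [hgx, hgy]
  rw [hVxx, hVxy, hVyy]
  rw [← hK]
  -- now pure algebra
  rw [hGxy, hG0]
  -- compute c^2 * K
  have hcK : c ^ 2 * K = s ^ 2 / (2 * G0) := by
    rw [hc, hG0]
    have h1 : (s / Real.sqrt (2 * G0)) ^ 2 = s ^ 2 / (2 * G0) := by
      rw [div_pow, Real.sq_sqrt (by positivity)]
    have h2 : ((2 / s) ^ ((n : ℝ) / 2)) ^ 2 = (2 / s) ^ (n : ℝ) := by
      rw [← Real.rpow_natCast ((2 / s) ^ ((n : ℝ) / 2)) 2, ← Real.rpow_mul (by positivity)]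
      norm_num
    have h3 : Real.pi / (2 * b) = (s / 2) ^ (2 : ℝ) := by
      rw [hb_def, Real.rpow_two]
      field_simp
    have h4 : K = (s / 2) ^ (n : ℝ) := by
      rw [hK, h3, ← Real.rpow_mul (by positivity)]
      congr 1
      push_cast
      ring
    rw [mul_pow, h1, h2, h4, mul_assoc, ← Real.mul_rpow (by positivity) (by positivity)]
    rw [show (2 / s) * (s / 2) = 1 by field_simp]
    rw [Real.one_rpow, mul_one]
  calc c ^ 2 * (K * G0) - c ^ 2 * (K * Gxy) - (c ^ 2 * (K * Gxy) - c ^ 2 * (K * G0))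
      = (c ^ 2 * K) * (2 * (G0 - Gxy)) := by ring
    _ = (s ^ 2 / (2 * G0)) * (2 * (G0 - Gxy)) := by rw [hcK]
    _ = s ^ 2 * (1 - Gxy / G0) := by field_simp
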